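/- Let (y_n) be a nondecreasing sequence of positive integers and W(n) the number of valid n-tuples. Then for all n ≥ 2, W(n) ≥ (1 + y_n - y_{n-1}) · W(n-1). -/

import Mathlib

/-- `x : Fin n → ℕ` (0-indexed version of `(x_1,…,x_n)`) is a valid n-tuple for the
input sequence `y`: `x_1 ≤ y n` and `x_{j+1} ≤ min (x_j) (y (n - j))` for `1 ≤ j ≤ n-1`. -/
def IsValid (y : ℕ → ℕ) (n : ℕ) (x : Fin n → ℕ) : Prop :=
  (∀ h : 0 < n, x ⟨0, h⟩ ≤ y n) ∧
  ∀ i : ℕ, ∀ h : i + 1 < n,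
    x ⟨i + 1, h⟩ ≤ min (x ⟨i, Nat.lt_of_succ_lt h⟩) (y (n - (i + 1)))

/-- `A y n k` : number of valid n-tuples whose first entry equals `k`. -/
noncomputable def A (y : ℕ → ℕ) (n k : ℕ) : ℕ :=
  Nat.card {x : Fin n → ℕ // IsValid y n x ∧ ∀ h : 0 < n, x ⟨0, h⟩ = k}

/-- `W y n` : total number of valid n-tuples. -/
noncomputable def W (y : ℕ → ℕ) (n : ℕ) : ℕ :=
  Nat.card {x : Fin n → ℕ // IsValid y n x}

lemma valid_bound (y : ℕ → ℕ) (n : ℕ) (x : Fin n → ℕ) (hx : IsValid y n x) :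
    ∀ i : Fin n, x i ≤ y n := by
  rintro ⟨i, hi⟩
  induction i with
  | zero => exact hx.1 (by omega)
  | succ j ih =>
      exact le_trans (le_trans (hx.2 j hi) (min_le_left _ _)) (ih (Nat.lt_of_succ_lt hi))

instance validFinite (y : ℕ → ℕ) (n : ℕ) : Finite {x : Fin n → ℕ // IsValid y n x} := by
  apply Finite.of_injective
    (fun x => (fun i => (⟨x.1 i, Nat.lt_succ_of_le (valid_bound y n x.1 x.2 i)⟩ :
      Fin (y n + 1)) : Fin n → Fin (y n + 1)))
  intro a b hab
  exact Subtype.ext (funext fun i => congrArg Fin.val (congrFun hab i))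

theorem stmt11 (y : ℕ → ℕ) (hmono : ∀ m, 1 ≤ m → y m ≤ y (m + 1))
    (hpos : ∀ m, 1 ≤ m → 1 ≤ y m) (n : ℕ) (hn : 2 ≤ n) :
    (1 + y n - y (n - 1)) * W y (n - 1) ≤ W y n := by
  obtain ⟨m, rfl⟩ : ∃ m, n = m + 1 := ⟨n - 1, by omega⟩
  have hm : 1 ≤ m := by omega
  have hy : y m ≤ y (m + 1) := hmono m hm
  simp only [Nat.add_sub_cancel]
  have h1 : 1 + y (m + 1) - y m = (y (m + 1) - y m) + 1 := by omega
  rw [h1]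
  -- the injection
  set d := y (m + 1) - y m with hd
  set S := {x : Fin m → ℕ // IsValid y m x}
  let g : Fin (d + 1) × S → (Fin (m + 1) → ℕ) := fun p i =>
    if h : 0 < i.1 then p.2.1 ⟨i.1 - 1, by omega⟩ else p.2.1 ⟨0, hm⟩ + p.1.1
  have hg0 : ∀ p : Fin (d + 1) × S, ∀ h : (0:ℕ) < m + 1,
      g p ⟨0, h⟩ = p.2.1 ⟨0, hm⟩ + p.1.1 := by
    intro p h; simp [g]
  have hgs : ∀ p : Fin (d + 1) × S, ∀ i : ℕ, ∀ h : i + 1 < m + 1,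
      g p ⟨i + 1, h⟩ = p.2.1 ⟨i, by omega⟩ := by
    intro p i h; exact dif_pos (Nat.succ_pos i)
  have hval : ∀ p : Fin (d + 1) × S, IsValid y (m + 1) (g p) := by
    intro p
    have ht : p.1.1 < y (m + 1) - y m + 1 := p.1.isLt
    constructor
    · intro h
      rw [hg0]
      have h0 : p.2.1 ⟨0, hm⟩ ≤ y m := p.2.2.1 hm
      omega
    · intro i h
      rw [hgs]
      rcases Nat.eq_zero_or_pos i with rfl | hi
      · rw [hg0]
        have h0 : p.2.1 ⟨0, hm⟩ ≤ y m := p.2.2.1 hm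
        simp only [Nat.add_sub_cancel]
        exact le_min (by omega) h0
      · obtain ⟨j, rfl⟩ : ∃ j, i = j + 1 := ⟨i - 1, by omega⟩
        rw [hgs]
        have := p.2.2.2 j (by omega)
        have heq : m + 1 - (j + 1 + 1) = m - (j + 1) := by omega
        rw [heq]
        exact this
  let F : Fin (d + 1) × S → {x : Fin (m + 1) → ℕ // IsValid y (m + 1) x} :=
    fun p => ⟨g p, hval p⟩
  have hinj : Function.Injective F := by
    intro p q hFe
    have he : g p = g q := congrArg Subtype.val hFe
    have hz : p.2 = q.2 := by
      apply Subtype.ext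
      funext i
      have := congrFun he ⟨i.1 + 1, by omega⟩
      rw [hgs, hgs] at this
      simpa using this
    have h0 := congrFun he ⟨0, by omega⟩
    rw [hg0, hg0, hz] at h0
    exact Prod.ext (Fin.ext (by omega)) hz
  have := Nat.card_le_card_of_injective F hinj
  calc (d + 1) * W y m = Nat.card (Fin (d + 1) × S) := by
        rw [Nat.card_prod, Nat.card_eq_fintype_card, Fintype.card_fin]; rfl
    _ ≤ W y (m + 1) := this
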